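/- For the Firework process, for every n ≥ 0, P(M > n) = u_{n+1}, where (u_n)_{n≥0} is the renewal sequence of the discrete renewal process with inter-arrival distribution q_k = (1-α_{k-1})·∏_{i=0}^{k-2} α_i on {1,2,...} ∪ {∞}. -/

import Mathlib

open MeasureTheory ProbabilityTheory Filter Finset
open scoped ENNReal

/-- The final number of spreaders of the Firework process:
`M = min{ i ≥ 0 : R_j ≤ i - j for all j = 0,...,i }`, with value `⊤` if no such `i` exists. -/
noncomputable def fireworkM {Ω : Type*} (R : ℕ → Ω → ℕ) (ω : Ω) : ℕ∞ :=
  sInf {N : ℕ∞ | ∃ i : ℕ, N = (i : ℕ∞) ∧ ∀ j ≤ i, R j ω ≤ i - j}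

/-- Auxiliary event: `E n = {ω | ∀ i < n, ∃ j ≤ i, i - j < R j ω}`. -/
def fwE {Ω : Type*} (R : ℕ → Ω → ℕ) (n : ℕ) : Set Ω :=
  {ω | ∀ i < n, ∃ j ≤ i, i - j < R j ω}

/-- Auxiliary event: `F j n` says `R j > n - 1 - j` and `R l ≤ n - 1 - l` for `j < l < n`. -/
def fwF {Ω : Type*} (R : ℕ → Ω → ℕ) (j n : ℕ) : Set Ω :=
  {ω | n - 1 - j < R j ω ∧ ∀ l, j < l → l < n → R l ω ≤ n - 1 - l}

lemma fwE_eq {Ω : Type*} (R : ℕ → Ω → ℕ) (n : ℕ) :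
    fwE R n = ⋂ (i : ℕ) (_ : i < n), ⋃ (j : ℕ) (_ : j ≤ i), R j ⁻¹' Set.Ioi (i - j) := by
  ext ω; simp [fwE]

lemma fwE_measurable {Ω : Type*} [MeasurableSpace Ω] (R : ℕ → Ω → ℕ)
    (hmeas : ∀ i, Measurable (R i)) (n : ℕ) : MeasurableSet (fwE R n) := by
  rw [fwE_eq]
  exact MeasurableSet.iInter fun i => MeasurableSet.iInter fun _ =>
    MeasurableSet.iUnion fun j => MeasurableSet.iUnion fun _ =>
      (hmeas j) measurableSet_Ioi

lemma fwF_eq {Ω : Type*} (R : ℕ → Ω → ℕ) (j n : ℕ) :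
    fwF R j n = R j ⁻¹' Set.Ioi (n - 1 - j) ∩
      ⋂ (l : ℕ) (_ : j < l) (_ : l < n), R l ⁻¹' Set.Iic (n - 1 - l) := by
  ext ω; simp [fwF]

lemma fwF_measurable {Ω : Type*} [MeasurableSpace Ω] (R : ℕ → Ω → ℕ)
    (hmeas : ∀ i, Measurable (R i)) (j n : ℕ) : MeasurableSet (fwF R j n) := by
  rw [fwF_eq]
  exact ((hmeas j) measurableSet_Ioi).inter
    (MeasurableSet.iInter fun l => MeasurableSet.iInter fun _ =>
      MeasurableSet.iInter fun _ => (hmeas l) measurableSet_Iic)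

/-- Decomposition of `E (n+1)` according to the largest `j ≤ n` with `R j > n - j`. -/
lemma fwE_succ_decomp {Ω : Type*} (R : ℕ → Ω → ℕ) (n : ℕ) :
    fwE R (n + 1) = ⋃ j ∈ Finset.range (n + 1), fwE R j ∩ fwF R j (n + 1) := by
  ext ω
  simp only [Set.mem_iUnion, Finset.mem_range, Set.mem_inter_iff]
  constructor
  · intro h
    classical
    set Q : ℕ → Prop := fun j => n - j < R j ω with hQ
    have hex : ∃ j ≤ n, Q j := by
      obtain ⟨j, hj, hlt⟩ := h n (Nat.lt_succ_self n)
      exact ⟨j, hj, hlt⟩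
    obtain ⟨j₀, hj₀n, hQj₀⟩ := hex
    set J := Nat.findGreatest Q n with hJ
    have hJn : J ≤ n := Nat.findGreatest_le n
    have hQJ : Q J := Nat.findGreatest_spec hj₀n hQj₀
    refine ⟨J, Nat.lt_succ_of_le hJn, ?_, ?_, ?_⟩
    · intro i hi
      exact h i (by omega)
    · show n + 1 - 1 - J < R J ω
      simpa using hQJ
    · intro l hl hln
      have hnl : ¬ Q l := Nat.findGreatest_is_greatest hl (by omega)
      simp only [hQ, not_lt] at hnl
      show R l ω ≤ n + 1 - 1 - l
      simpa using hnl
  · rintro ⟨j, hj, hE, hFj, hFl⟩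
    intro i hi
    by_cases hij : i < j
    · exact hE i hij
    · refine ⟨j, by omega, ?_⟩
      have h1 : n + 1 - 1 - j < R j ω := hFj
      have : n - j < R j ω := by simpa using h1
      omega

lemma fwE_decomp_disjoint {Ω : Type*} (R : ℕ → Ω → ℕ) (n : ℕ) :
    (↑(Finset.range (n + 1)) : Set ℕ).PairwiseDisjoint
      (fun j => fwE R j ∩ fwF R j (n + 1)) := by
  intro a ha b hb hab
  simp only [Finset.coe_range, Set.mem_Iio] at ha hb
  have key : ∀ x y : ℕ, x < y → y ≤ n →
      Disjoint (fwE R x ∩ fwF R x (n + 1)) (fwE R y ∩ fwF R y (n + 1)) := by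
    intro x y hxy hyn
    refine Set.disjoint_left.2 ?_
    rintro ω ⟨_, hFx⟩ ⟨_, hFy⟩
    have h1 := hFx.2 y hxy (by omega)
    have h2 := hFy.1
    omega
  rcases Nat.lt_or_ge a b with h | h
  · exact key a b h (by omega)
  · exact (key b a (by omega) (by omega)).symm

theorem rumor_aux {Ω : Type*} [MeasurableSpace Ω] (P : Measure Ω) [IsProbabilityMeasure P]
    (R : ℕ → Ω → ℕ) (hmeas : ∀ i, Measurable (R i))
    (hindep : iIndepFun R P)
    (hident : ∀ i, Measure.map (R i) P = Measure.map (R 0) P)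
    (α : ℕ → ℝ≥0∞) (hα : ∀ k, P {ω | R 0 ω ≤ k} = α k)
    (u : ℕ → ℝ≥0∞) (hu0 : u 0 = 1)
    (hurec : ∀ n : ℕ, u (n + 1) =
      ∑ k ∈ Finset.Icc 1 (n + 1),
        ((1 - α (k - 1)) * ∏ i ∈ Finset.range (k - 1), α i) * u (n + 1 - k)) :
    ∀ n : ℕ, P (fwE R n) = u n := by
  classical
  -- marginal computations
  have hmap : ∀ (l : ℕ) (s : Set ℕ), P (R l ⁻¹' s) = P (R 0 ⁻¹' s) := by
    intro l s
    have hs : MeasurableSet s := trivial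
    rw [← Measure.map_apply (hmeas l) hs, hident l, Measure.map_apply (hmeas 0) hs]
  have hIic : ∀ (l c : ℕ), P (R l ⁻¹' Set.Iic c) = α c := by
    intro l c
    rw [hmap l]
    exact hα c
  have hIoi : ∀ (l c : ℕ), P (R l ⁻¹' Set.Ioi c) = 1 - α c := by
    intro l c
    rw [hmap l]
    have hc : (R 0 ⁻¹' Set.Ioi c) = (R 0 ⁻¹' Set.Iic c)ᶜ := by
      ext ω; simp
    rw [hc, measure_compl ((hmeas 0) measurableSet_Iic) (measure_ne_top P _), measure_univ]
    have h0 : P (R 0 ⁻¹' Set.Iic c) = α c := hα c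
    rw [h0]
  -- probability of F j (n+1) for j ≤ n
  have hF : ∀ n j : ℕ, j ≤ n → P (fwF R j (n + 1)) =
      (1 - α (n - j)) * ∏ i ∈ Finset.range (n - j), α i := by
    intro n j hjn
    set sets : ℕ → Set ℕ := fun l => if l = j then Set.Ioi (n - j) else Set.Iic (n - l)
      with hsets
    have hFeq : fwF R j (n + 1) = ⋂ l ∈ Finset.Icc j n, R l ⁻¹' sets l := by
      ext ω
      simp only [fwF, Set.mem_setOf_eq, Set.mem_iInter, Finset.mem_Icc, Set.mem_preimage,
        hsets]
      constructor
      · rintro ⟨h1, h2⟩ l ⟨hjl, hln⟩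
        by_cases hlj : l = j
        · subst hlj; simp only [if_pos rfl, Set.mem_Ioi]
          simpa using h1
        · simp only [if_neg hlj, Set.mem_Iic]
          have := h2 l (by omega) (by omega)
          simpa using this
      · intro h
        constructor
        · have := h j ⟨le_refl j, hjn⟩
          simp only [if_pos rfl, Set.mem_Ioi] at this
          simpa using this
        · intro l hjl hln
          have := h l ⟨by omega, by omega⟩
          simp only [if_neg (by omega : ¬ l = j), Set.mem_Iic] at this
          simpa using this
    rw [hFeq, hindep.measure_inter_preimage_eq_mul (Finset.Icc j n)
      (sets := sets) (fun i _ => trivial)]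
    have hins : Finset.Icc j n = insert j (Finset.Icc (j + 1) n) := by
      ext x; simp only [Finset.mem_Icc, Finset.mem_insert]; omega
    rw [hins, Finset.prod_insert (by simp)]
    congr 1
    · simp only [hsets, if_pos rfl]; exact hIoi j (n - j)
    · have h2 : ∀ l ∈ Finset.Icc (j + 1) n, P (R l ⁻¹' sets l) = α (n - l) := by
        intro l hl
        simp only [Finset.mem_Icc] at hl
        rw [show sets l = Set.Iic (n - l) by simp only [hsets]; rw [if_neg (by omega)]]
        exact hIic l (n - l)
      rw [Finset.prod_congr rfl h2]
      refine Finset.prod_nbij' (fun l => n - l) (fun i => n - i) ?_ ?_ ?_ ?_ ?_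
      · intro l hl; simp only [Finset.mem_Icc] at hl; simp only [Finset.mem_range]; omega
      · intro i hi; simp only [Finset.mem_range] at hi; simp only [Finset.mem_Icc]; omega
      · intro l hl; simp only [Finset.mem_Icc] at hl; show n - (n - l) = l; omega
      · intro i hi; simp only [Finset.mem_range] at hi; show n - (n - i) = i; omega
      · intro l hl; rfl
  -- independence of E j and F j (n+1)
  have hEF : ∀ n j : ℕ, j ≤ n →
      P (fwE R j ∩ fwF R j (n + 1)) = P (fwE R j) * P (fwF R j (n + 1)) := by
    intro n j hjn
    set S := Finset.range j
    set T := Finset.Icc j n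
    have hST : Disjoint S T := by
      rw [Finset.disjoint_left]
      intro a haS haT
      simp only [S, T, Finset.mem_range] at haS
      simp only [T, Finset.mem_Icc] at haT
      omega
    have hIF := hindep.indepFun_finset S T hST hmeas
    set A : Set ((i : S) → ℕ) :=
      {x | ∀ i : {y // y ∈ S}, ∃ l : {y // y ∈ S}, l.1 ≤ i.1 ∧ i.1 - l.1 < x l} with hA
    have hjT : j ∈ T := by simp only [T, Finset.mem_Icc]; omega
    set B : Set ((i : T) → ℕ) :=
      {x | n - j < x ⟨j, hjT⟩ ∧ (∀ l : {y // y ∈ T}, j < l.1 → x l ≤ n - l.1)} with hB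
    have hAmeas : MeasurableSet A := by
      have : A = ⋂ (i : {y // y ∈ S}), ⋃ (l : {y // y ∈ S}) (_ : l.1 ≤ i.1),
          (fun x : (i : S) → ℕ => x l) ⁻¹' Set.Ioi (i.1 - l.1) := by
        ext x; simp [hA]
      rw [this]
      exact MeasurableSet.iInter fun i => MeasurableSet.iUnion fun l =>
        MeasurableSet.iUnion fun _ => (measurable_pi_apply l) measurableSet_Ioi
    have hBmeas : MeasurableSet B := by
      have hBd : B = ((fun x : (i : T) → ℕ => x ⟨j, hjT⟩) ⁻¹' Set.Ioi (n - j)) ∩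
          (⋂ (l : {y // y ∈ T}) (_ : j < l.1),
            (fun x : (i : T) → ℕ => x l) ⁻¹' Set.Iic (n - l.1)) := by
        ext x; simp [hB]
      rw [hBd]
      exact ((measurable_pi_apply _) measurableSet_Ioi).inter
        (MeasurableSet.iInter fun l => MeasurableSet.iInter fun _ =>
          (measurable_pi_apply l) measurableSet_Iic)
    have hEpre : fwE R j = (fun a (i : S) => R i a) ⁻¹' A := by
      ext ω
      simp only [fwE, Set.mem_setOf_eq, Set.mem_preimage, hA]
      constructor
      · rintro h ⟨i, hi⟩
        simp only [S, Finset.mem_range] at hi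
        obtain ⟨l, hl, hlt⟩ := h i hi
        exact ⟨⟨l, by simp only [S, Finset.mem_range]; omega⟩, hl, hlt⟩
      · intro h i hi
        obtain ⟨l, hl, hlt⟩ := h ⟨i, by simp only [S, Finset.mem_range]; omega⟩
        exact ⟨l.1, hl, hlt⟩
    have hFpre : fwF R j (n + 1) = (fun a (i : T) => R i a) ⁻¹' B := by
      ext ω
      simp only [fwF, Set.mem_setOf_eq, Set.mem_preimage, hB]
      constructor
      · rintro ⟨h1, h2⟩
        constructor
        · simpa using h1
        · rintro ⟨l, hl⟩ hjl
          simp only [T, Finset.mem_Icc] at hl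
          have := h2 l hjl (by omega)
          simpa using this
      · rintro ⟨h1, h2⟩
        constructor
        · simpa using h1
        · intro l hjl hln
          have := h2 ⟨l, by simp only [T, Finset.mem_Icc]; omega⟩ hjl
          simpa using this
    rw [hEpre, hFpre]
    exact hIF.measure_inter_preimage_eq_mul A B hAmeas hBmeas
  -- main induction
  have key : ∀ n : ℕ, ∀ m ≤ n, P (fwE R m) = u m := by
    intro n
    induction n with
    | zero =>
      intro m hm
      obtain rfl : m = 0 := Nat.le_zero.mp hm
      have h0 : fwE R 0 = Set.univ := by ext ω; simp [fwE]
      rw [h0, measure_univ, hu0]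
    | succ n ih =>
      intro m hm
      rcases Nat.lt_or_ge m (n + 1) with hmn | hmn
      · exact ih m (by omega)
      obtain rfl : m = n + 1 := by omega
      rw [fwE_succ_decomp R n,
        measure_biUnion_finset (fwE_decomp_disjoint R n)
          (fun j _ => ((fwE_measurable R hmeas j).inter (fwF_measurable R hmeas j (n + 1))))]
      have hterm : ∀ j ∈ Finset.range (n + 1),
          P (fwE R j ∩ fwF R j (n + 1)) =
            u j * ((1 - α (n - j)) * ∏ i ∈ Finset.range (n - j), α i) := by
        intro j hj
        simp only [Finset.mem_range] at hj
        rw [hEF n j (by omega), hF n j (by omega), ih j (by omega)]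
      rw [Finset.sum_congr rfl hterm, hurec n]
      refine Finset.sum_nbij' (fun j => n + 1 - j) (fun k => n + 1 - k) ?_ ?_ ?_ ?_ ?_
      · intro j hj; simp only [Finset.mem_range] at hj; simp only [Finset.mem_Icc]; omega
      · intro k hk; simp only [Finset.mem_Icc] at hk; simp only [Finset.mem_range]; omega
      · intro j hj; simp only [Finset.mem_range] at hj
        show n + 1 - (n + 1 - j) = j; omega
      · intro k hk; simp only [Finset.mem_Icc] at hk
        show n + 1 - (n + 1 - k) = k; omega
      · intro j hj
        simp only [Finset.mem_range] at hj
        show u j * ((1 - α (n - j)) * ∏ i ∈ Finset.range (n - j), α i) =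
          ((1 - α (n + 1 - j - 1)) * ∏ i ∈ Finset.range (n + 1 - j - 1), α i) *
            u (n + 1 - (n + 1 - j))
        rw [show n + 1 - j - 1 = n - j by omega, show n + 1 - (n + 1 - j) = j by omega]
        exact mul_comm _ _
  intro n
  exact key n n le_rfl

theorem rumor_stmt_4 {Ω : Type*} [MeasurableSpace Ω] (P : Measure Ω) [IsProbabilityMeasure P]
    (R : ℕ → Ω → ℕ) (hmeas : ∀ i, Measurable (R i))
    (hindep : iIndepFun R P)
    (hident : ∀ i, Measure.map (R i) P = Measure.map (R 0) P)
    (α : ℕ → ℝ≥0∞) (hα : ∀ k, P {ω | R 0 ω ≤ k} = α k)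
    (hα0 : 0 < α 0 ∧ α 0 < 1)
    (u : ℕ → ℝ≥0∞) (hu0 : u 0 = 1)
    (hurec : ∀ n : ℕ, u (n + 1) =
      ∑ k ∈ Finset.Icc 1 (n + 1),
        ((1 - α (k - 1)) * ∏ i ∈ Finset.range (k - 1), α i) * u (n + 1 - k)) :
    ∀ n : ℕ, P {ω | (n : ℕ∞) < fireworkM R ω} = u (n + 1) := by
  intro n
  have hset : {ω | (n : ℕ∞) < fireworkM R ω} = fwE R (n + 1) := by
    ext ω
    simp only [Set.mem_setOf_eq, fireworkM, fwE]
    constructor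
    · intro h i hi
      by_contra hcon
      push_neg at hcon
      have hmem : (i : ℕ∞) ∈ {N : ℕ∞ | ∃ i' : ℕ, N = (i' : ℕ∞) ∧ ∀ j ≤ i', R j ω ≤ i' - j} :=
        ⟨i, rfl, fun j hj => hcon j hj⟩
      have := sInf_le hmem
      have hni : (n : ℕ∞) < (i : ℕ∞) := lt_of_lt_of_le h this
      rw [Nat.cast_lt] at hni
      omega
    · intro h
      have hlb : ((n : ℕ) + 1 : ℕ∞) ≤
          sInf {N : ℕ∞ | ∃ i : ℕ, N = (i : ℕ∞) ∧ ∀ j ≤ i, R j ω ≤ i - j} := by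
        apply le_sInf
        rintro b ⟨i, rfl, hb⟩
        by_cases hin : i < n + 1
        · obtain ⟨j, hj, hlt⟩ := h i hin
          exact absurd (hb j hj) (by omega)
        · exact_mod_cast by omega
      calc (n : ℕ∞) < ((n : ℕ) + 1 : ℕ∞) := by exact_mod_cast Nat.lt_succ_self n
        _ ≤ _ := hlb
  rw [hset]
  exact rumor_aux P R hmeas hindep hident α hα u hu0 hurec (n + 1)
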